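/- Let 0 < S_1 < ... < S_L < 1 and 0 < T_1 < ... < T_L < 1 with T_1 = S_1 and T_l > S_l for l ≥ 2. Define α_L = 1/S_L, α_{-L} = 0, and recursively for l = L−1 down to 1: α_l = [(1−S_l)T_{l+1}α_{l+1} + (1−S_l)(1−T_{l+1})α_{-(l+1)} − (1−T_{l+1})] / (T_{l+1} − S_l) and α_{-l} = (1 − S_l α_l)/(1 − S_l); set α_0 = 1. Then for every l ∈ {1,...,L}: S_l·α_l + (1−S_l)·α_{-l} = 1, and for every l ∈ {0,...,L−1}: T_{l+1}·α_{l+1} + (1−T_{l+1})·α_{-(l+1)} = T_{l+1}·α_l + (1−T_{l+1})·α_{-l}. -/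
import Mathlib


/-- The pair (α_{L−k}, α_{−(L−k)}) of constants of Algorithm 2, computed by downward
recursion from level L. -/
noncomputable def alphaPair (L : ℕ) (S T : ℕ → ℝ) : ℕ → ℝ × ℝ
  | 0 => (1 / S L, 0)
  | k + 1 =>
      let p := alphaPair L S T k
      let l := L - (k + 1)
      let a := ((1 - S l) * T (l + 1) * p.1 + (1 - S l) * (1 - T (l + 1)) * p.2
                  - (1 - T (l + 1))) / (T (l + 1) - S l)
      (a, (1 - S l * a) / (1 - S l))

/-- The constants α_z, z ∈ {−L,…,L}, of Algorithm 2 (α_0 = 1). -/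
noncomputable def alphaC (L : ℕ) (S T : ℕ → ℝ) (z : ℤ) : ℝ :=
  if z = 0 then 1
  else if 0 < z then (alphaPair L S T (L - z.toNat)).1
  else (alphaPair L S T (L - (-z).toNat)).2


lemma chain_mono (L : ℕ) (f : ℕ → ℝ) (h : ∀ l : ℕ, 1 ≤ l → l < L → f l < f (l + 1)) :
    ∀ a b : ℕ, 1 ≤ a → a ≤ b → b ≤ L → f a ≤ f b := by
  intro a b ha hab hbL
  induction b with
  | zero => omega
  | succ n ih =>
    rcases Nat.lt_or_ge a (n + 1) with h' | h'
    · exact le_trans (ih (by omega) (by omega)) (le_of_lt (h n (by omega) (by omega)))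
    · have : a = n + 1 := by omega
      simp [this]

lemma alphaC_pos (L : ℕ) (S T : ℕ → ℝ) (l : ℕ) (hl : 1 ≤ l) :
    alphaC L S T (l : ℤ) = (alphaPair L S T (L - l)).1 := by
  rw [alphaC, if_neg (by omega), if_pos (by omega)]
  simp

lemma alphaC_neg (L : ℕ) (S T : ℕ → ℝ) (l : ℕ) (hl : 1 ≤ l) :
    alphaC L S T (-(l : ℤ)) = (alphaPair L S T (L - l)).2 := by
  rw [alphaC, if_neg (by omega), if_neg (by omega)]
  simp

/-- Lemma 3: the constants of Algorithm 2 satisfy the skip-indifference and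
level-indifference balance equations. -/
theorem alpha_balance_equations
    (L : ℕ) (hL : 1 ≤ L) (S T : ℕ → ℝ)
    (hS0 : 0 < S 1) (hSmono : ∀ l : ℕ, 1 ≤ l → l < L → S l < S (l + 1)) (hSL : S L < 1)
    (hT0 : 0 < T 1) (hTmono : ∀ l : ℕ, 1 ≤ l → l < L → T l < T (l + 1)) (hTL : T L < 1)
    (hTS1 : T 1 = S 1) (hTS : ∀ l : ℕ, 2 ≤ l → l ≤ L → S l < T l) :
    (∀ l : ℕ, 1 ≤ l → l ≤ L →
      S l * alphaC L S T l + (1 - S l) * alphaC L S T (-(l : ℤ)) = 1) ∧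
    (∀ l : ℕ, l < L →
      T (l + 1) * alphaC L S T ((l : ℤ) + 1)
        + (1 - T (l + 1)) * alphaC L S T (-((l : ℤ) + 1))
      = T (l + 1) * alphaC L S T l + (1 - T (l + 1)) * alphaC L S T (-(l : ℤ))) := by

  have hSc : ∀ a b : ℕ, 1 ≤ a → a ≤ b → b ≤ L → S a ≤ S b := chain_mono L S hSmono
  have hTc : ∀ a b : ℕ, 1 ≤ a → a ≤ b → b ≤ L → T a ≤ T b := chain_mono L T hTmono
  have hSpos : ∀ l : ℕ, 1 ≤ l → l ≤ L → 0 < S l :=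
    fun l h1 h2 => lt_of_lt_of_le hS0 (hSc 1 l le_rfl h1 h2)
  have hSlt1 : ∀ l : ℕ, 1 ≤ l → l ≤ L → S l < 1 :=
    fun l h1 h2 => lt_of_le_of_lt (hSc l L h1 h2 le_rfl) hSL
  have balance1 : ∀ l : ℕ, 1 ≤ l → l ≤ L →
      S l * (alphaPair L S T (L - l)).1 + (1 - S l) * (alphaPair L S T (L - l)).2 = 1 := by
    intro l h1 h2
    rcases eq_or_lt_of_le h2 with heq | hlt
    · subst heq
      have hne : S l ≠ 0 := (hSpos l h1 le_rfl).ne'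
      simp [alphaPair]
      field_simp
    · have hk : L - l = (L - l - 1) + 1 := by omega
      rw [hk]
      simp only [alphaPair]
      have hll : L - (L - l - 1 + 1) = l := by omega
      rw [hll]
      have h1S : (1 : ℝ) - S l ≠ 0 := by
        have := hSlt1 l h1 (le_of_lt hlt); linarith
      field_simp
      try ring
  constructor
  · intro l h1 h2
    rw [alphaC_pos L S T l h1, alphaC_neg L S T l h1]
    exact balance1 l h1 h2
  · intro l hlL
    rcases Nat.eq_zero_or_pos l with rfl | hl1
    · have e1 : ((0 : ℕ) : ℤ) + 1 = ((1 : ℕ) : ℤ) := by norm_num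
      rw [e1, alphaC_pos L S T 1 le_rfl, alphaC_neg L S T 1 le_rfl]
      have h0 : alphaC L S T ((0 : ℕ) : ℤ) = 1 := by simp [alphaC]
      have h0' : alphaC L S T (-((0 : ℕ) : ℤ)) = 1 := by simp [alphaC]
      rw [h0, h0']
      have := balance1 1 le_rfl hL
      rw [hTS1]
      linarith [this]
    · have hl2 : 1 ≤ l + 1 := by omega
      have e1 : ((l : ℤ) + 1) = (((l + 1 : ℕ)) : ℤ) := by push_cast; ring
      rw [e1, alphaC_pos L S T (l + 1) hl2, alphaC_neg L S T (l + 1) hl2,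
        alphaC_pos L S T l hl1, alphaC_neg L S T l hl1]
      have hk : L - l = (L - (l + 1)) + 1 := by omega
      rw [hk]
      simp only [alphaPair]
      have hll : L - (L - (l + 1) + 1) = l := by omega
      rw [hll]
      have hS1 : S l < 1 := hSlt1 l hl1 (by omega)
      have hTSl : S l < T (l + 1) := by
        have h1 : S l < S (l + 1) := hSmono l hl1 hlL
        have h2 : S (l + 1) < T (l + 1) := hTS (l + 1) (by omega) (by omega)
        linarith
      have h1S : (1 : ℝ) - S l ≠ 0 := by linarith
      have hTs : T (l + 1) - S l ≠ 0 := by linarith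
      field_simp
      ring
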